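/- Suppose 0 < ε < 1 and two fractions f'₀, f'₁ ∈ [0,1] of good processors vote for bit 0 and bit 1 respectively, with f'₀ + f'₁ ≤ 2/3 + ε. If there exist informed processors x and y with fraction_x ≥ (1-ε₀)(2/3 + ε/2) and fraction_x ≤ (1+ε₀)(f'₀ + 1/3 - ε), and similarly fraction_y ≥ (1-ε₀)(2/3 + ε/2) and fraction_y ≤ (1+ε₀)(f'₁ + 1/3 - ε), then both f'₀ and f'₁ are at least (1/3 + (3/2)ε - ε₀ - (3/2)ε·ε₀)/(1+ε₀); consequently, for ε₀ sufficiently small (as a function of ε), f'₀ + f'₁ > 2/3 + ε, a contradiction — hence no such pair x, y can exist. -/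
import Mathlib


/-- No two informed processors can cross the threshold with opposite bits: if
`f'₀ + f'₁ ≤ 2/3 + ε` and informed processors `x, y` satisfy
`(1-ε₀)(2/3+ε/2) ≤ fraction_x ≤ (1+ε₀)(f'₀+1/3-ε)` and similarly for `y` with `f'₁`,
then both `f'₀, f'₁ ≥ (1/3 + (3/2)ε - ε₀ - (3/2)ε·ε₀)/(1+ε₀)`, and for `ε₀`
sufficiently small this forces `f'₀ + f'₁ > 2/3 + ε`, a contradiction. -/
theorem stmt9 (ε : ℝ) (hε : 0 < ε) (hε1 : ε < 1) :
    ∃ ε₁ : ℝ, 0 < ε₁ ∧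
      ∀ ε₀ f0 f1 fx fy : ℝ, 0 < ε₀ → ε₀ ≤ ε₁ →
        0 ≤ f0 → f0 ≤ 1 → 0 ≤ f1 → f1 ≤ 1 →
        f0 + f1 ≤ 2/3 + ε →
        (1 - ε₀) * (2/3 + ε/2) ≤ fx → fx ≤ (1 + ε₀) * (f0 + 1/3 - ε) →
        (1 - ε₀) * (2/3 + ε/2) ≤ fy → fy ≤ (1 + ε₀) * (f1 + 1/3 - ε) →
        ((1/3 + 3/2 * ε - ε₀ - 3/2 * ε * ε₀) / (1 + ε₀) ≤ f0 ∧
         (1/3 + 3/2 * ε - ε₀ - 3/2 * ε * ε₀) / (1 + ε₀) ≤ f1) ∧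
        False := by
  refine ⟨ε/8, by linarith, ?_⟩
  intro ε₀ f0 f1 fx fy h0 h1 hf0 hf0' hf1 hf1' hsum hx1 hx2 hy1 hy2
  have hpos : (0:ℝ) < 1 + ε₀ := by linarith
  have hx : (1 - ε₀) * (2/3 + ε/2) ≤ (1 + ε₀) * (f0 + 1/3 - ε) := le_trans hx1 hx2
  have hy : (1 - ε₀) * (2/3 + ε/2) ≤ (1 + ε₀) * (f1 + 1/3 - ε) := le_trans hy1 hy2
  have k0 : 1/3 + 3/2 * ε - ε₀ - 3/2 * ε * ε₀ ≤ f0 * (1 + ε₀) := by nlinarith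
  have k1 : 1/3 + 3/2 * ε - ε₀ - 3/2 * ε * ε₀ ≤ f1 * (1 + ε₀) := by nlinarith
  refine ⟨⟨(div_le_iff₀ hpos).mpr k0, (div_le_iff₀ hpos).mpr k1⟩, ?_⟩
  nlinarith
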